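/- Let ρ, μ, ε, G > 0 and L_f, L_f̃ ≥ 0, and let x ∈ X and y ∈ Y. Assume: each map y' ↦ g̃_i(x,y') is convex on Y and differentiable at y with gradient ∇_y g̃_i(x,y); there exists ẑ ∈ Y with g̃_i(x,ẑ) ≤ −G for all i; and there exist s, s̃ ∈ ℝᵐ with ‖s‖ ≤ L_f and ‖s̃‖ ≤ L_f̃ such that ‖s + ρ s̃ + 2ρμ Σ_{i=1}^{l} [g̃_i(x,y)]₊ ∇_y g̃_i(x,y)‖ ≤ ε. Then ‖[g̃(x,y)]₊‖ ≤ (2μG)⁻¹ D_Y ( ρ⁻¹ε + ρ⁻¹L_f + L_f̃ ). -/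

import Mathlib

noncomputable section

open Set

open scoped RealInnerProductSpace

/-- Euclidean space `ℝⁿ`. -/
abbrev En (n : ℕ) := EuclideanSpace ℝ (Fin n)

/-- Componentwise positive part `[v]₊` of a vector `v ∈ ℝˡ`. -/
def posPart {l : ℕ} (v : En l) : En l := WithLp.toLp 2 (fun i => max (v i) 0)

lemma grad_ineq {m : ℕ} {Y : Set (En m)} (hY : Convex ℝ Y) {f : En m → ℝ}
    (hconv : ConvexOn ℝ Y f) {y z : En m} (hy : y ∈ Y) (hz : z ∈ Y) {g : En m}
    (hg : HasGradientAt f g y) : ⟪g, z - y⟫ ≤ f z - f y := by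
  set c : ℝ →ᵃ[ℝ] En m := AffineMap.lineMap y z with hc
  have hcd : HasDerivAt (fun t : ℝ => c t) (z - y) 0 := by
    simp only [hc, AffineMap.lineMap_apply, vsub_eq_sub, vadd_eq_add]
    simpa using ((hasDerivAt_id (0:ℝ)).smul_const (z - y)).add_const y
  have hfd : HasFDerivAt f (InnerProductSpace.toDual ℝ (En m) g) y :=
    (hasGradientAt_iff_hasFDerivAt).mp hg
  have hc0 : c 0 = y := by simp [hc]
  have hφ : HasDerivAt (f ∘ fun t : ℝ => c t) (⟪g, z - y⟫) 0 := by
    rw [← hc0] at hfd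
    have := hfd.comp_hasDerivAt (0:ℝ) hcd
    simpa [InnerProductSpace.toDual_apply_apply] using this
  have hphiconv : ConvexOn ℝ (Icc (0:ℝ) 1) (f ∘ fun t : ℝ => c t) := by
    refine ((hconv.comp_affineMap c).subset ?_ (convex_Icc 0 1))
    intro t ht
    have : c t ∈ segment ℝ y z := by
      rw [segment_eq_image_lineMap]
      exact ⟨t, ht, rfl⟩
    exact hY.segment_subset hy hz this
  have := hphiconv.le_slope_of_hasDerivAt (x := 0) (y := 1)
    (by simp) (by simp) one_pos hφ
  simpa [slope_def_field, hc, AffineMap.lineMap_apply] using this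

theorem stmt14 {n m l : ℕ} (hn : 0 < n) (hm : 0 < m) (hl : 0 < l)
    (X : Set (En n)) (Y : Set (En m))
    (hXne : X.Nonempty) (hXcpt : IsCompact X)
    (hYne : Y.Nonempty) (hYcpt : IsCompact Y) (hYconv : Convex ℝ Y)
    (gt : En n × En m → En l)
    (ρ μ ε G Lf Lft : ℝ) (hρ : 0 < ρ) (hμ : 0 < μ) (hε : 0 < ε) (hG : 0 < G)
    (hLf : 0 ≤ Lf) (hLft : 0 ≤ Lft)
    (x : En n) (hx : x ∈ X) (y : En m) (hy : y ∈ Y)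
    -- each `g̃ᵢ(x,·)` is convex on Y and differentiable at y with gradient `∇_y g̃ᵢ(x,y)`
    (hgtconv : ∀ i, ConvexOn ℝ Y fun y' => gt (x, y') i)
    (gradg : Fin l → En m)
    (hgrad : ∀ i, HasGradientAt (fun y' => gt (x, y') i) (gradg i) y)
    -- Slater point at x
    (zhat : En m) (hzhat : zhat ∈ Y) (hzhatG : ∀ i, gt (x, zhat) i ≤ -G)
    (s st : En m) (hs : ‖s‖ ≤ Lf) (hst : ‖st‖ ≤ Lft)
    (hnorm : ‖s + ρ • st + (2 * ρ * μ) • ∑ i, max (gt (x, y) i) 0 • gradg i‖ ≤ ε) :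
    ‖posPart (gt (x, y))‖ ≤
      (2 * μ * G)⁻¹ * Metric.diam Y * (ρ⁻¹ * ε + ρ⁻¹ * Lf + Lft) := by
  set a : Fin l → ℝ := fun i => max (gt (x, y) i) 0 with ha
  set w : En m := ∑ i, a i • gradg i with hw
  set d : En m := y - zhat with hd
  set v : En m := s + ρ • st + (2 * ρ * μ) • w with hv
  -- gradient inequality for each i
  have hstep1 : ∀ i, gt (x, y) i + G ≤ ⟪gradg i, d⟫ := by
    intro i
    have h1 : ⟪gradg i, zhat - y⟫ ≤ gt (x, zhat) i - gt (x, y) i :=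
      grad_ineq hYconv (hgtconv i) hy hzhat (hgrad i)
    have h2 : ⟪gradg i, d⟫ = -⟪gradg i, zhat - y⟫ := by
      rw [hd, show y - zhat = -(zhat - y) by abel, inner_neg_right]
    have := hzhatG i
    rw [h2]; linarith
  have hstep2 : ∀ i, G * a i ≤ a i * ⟪gradg i, d⟫ := by
    intro i
    have hai : 0 ≤ a i := le_max_right _ _
    have haigt : 0 ≤ a i * gt (x, y) i := by
      rcases le_or_gt (gt (x, y) i) 0 with h | h
      · have : a i = 0 := max_eq_right h
        simp [this]
      · exact mul_nonneg hai h.le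
    nlinarith [hstep1 i, mul_le_mul_of_nonneg_left (hstep1 i) hai]
  have hwd : ⟪w, d⟫ = ∑ i, a i * ⟪gradg i, d⟫ := by
    rw [hw, sum_inner]
    exact Finset.sum_congr rfl fun i _ => real_inner_smul_left _ _ _
  have hstep3 : G * ∑ i, a i ≤ ⟪w, d⟫ := by
    rw [hwd, Finset.mul_sum]
    exact Finset.sum_le_sum fun i _ => hstep2 i
  -- diameter bound
  have hdD : ‖d‖ ≤ Metric.diam Y := by
    rw [hd, ← dist_eq_norm]
    exact Metric.dist_le_diam_of_mem hYcpt.isBounded hy hzhat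
  have hDnn : (0:ℝ) ≤ Metric.diam Y := Metric.diam_nonneg
  -- inner product bound
  have hvd : ⟪v, d⟫ ≤ ε * ‖d‖ := by
    calc ⟪v, d⟫ ≤ ‖v‖ * ‖d‖ := real_inner_le_norm _ _
      _ ≤ ε * ‖d‖ := mul_le_mul_of_nonneg_right hnorm (norm_nonneg _)
  have hsd : -⟪s, d⟫ ≤ Lf * ‖d‖ := by
    calc -⟪s, d⟫ ≤ |⟪s, d⟫| := neg_le_abs _
      _ ≤ ‖s‖ * ‖d‖ := abs_real_inner_le_norm _ _
      _ ≤ Lf * ‖d‖ := mul_le_mul_of_nonneg_right hs (norm_nonneg _)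
  have hstd : -⟪st, d⟫ ≤ Lft * ‖d‖ := by
    calc -⟪st, d⟫ ≤ |⟪st, d⟫| := neg_le_abs _
      _ ≤ ‖st‖ * ‖d‖ := abs_real_inner_le_norm _ _
      _ ≤ Lft * ‖d‖ := mul_le_mul_of_nonneg_right hst (norm_nonneg _)
  have hexpand : (2 * ρ * μ) * ⟪w, d⟫ = ⟪v, d⟫ - ⟪s, d⟫ - ρ * ⟪st, d⟫ := by
    rw [hv]
    simp only [inner_add_left, real_inner_smul_left, RCLike.star_def, starRingEnd_apply, star_trivial]
    ring
  have hwdbd : (2 * ρ * μ) * ⟪w, d⟫ ≤ (ε + Lf + ρ * Lft) * ‖d‖ := by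
    rw [hexpand]
    have := mul_le_mul_of_nonneg_left hstd hρ.le
    nlinarith
  -- norm of posPart bounded by sum
  have hPsum : ‖posPart (gt (x, y))‖ ≤ ∑ i, a i := by
    rw [EuclideanSpace.norm_eq]
    have h1 : ∑ i, ‖posPart (gt (x, y)) i‖ ^ 2 ≤ (∑ i, a i) ^ 2 := by
      have heq : ∀ i, ‖posPart (gt (x, y)) i‖ = a i := by
        intro i
        show ‖max (gt (x, y) i) 0‖ = a i
        rw [Real.norm_of_nonneg (le_max_right _ _)]
      simp_rw [heq]
      exact Finset.sum_sq_le_sq_sum_of_nonneg fun i _ => le_max_right _ _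
    calc Real.sqrt (∑ i, ‖posPart (gt (x, y)) i‖ ^ 2)
        ≤ Real.sqrt ((∑ i, a i) ^ 2) := Real.sqrt_le_sqrt h1
      _ = ∑ i, a i := Real.sqrt_sq (Finset.sum_nonneg fun i _ => le_max_right _ _)
  -- combine
  have hcoef : 0 ≤ ε + Lf + ρ * Lft := by positivity
  have hmain : 2 * ρ * μ * G * (∑ i, a i) ≤ Metric.diam Y * (ε + Lf + ρ * Lft) := by
    have h1 : (2 * ρ * μ) * (G * ∑ i, a i) ≤ (2 * ρ * μ) * ⟪w, d⟫ :=
      mul_le_mul_of_nonneg_left hstep3 (by positivity)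
    have h2 : (ε + Lf + ρ * Lft) * ‖d‖ ≤ (ε + Lf + ρ * Lft) * Metric.diam Y :=
      mul_le_mul_of_nonneg_left hdD hcoef
    calc 2 * ρ * μ * G * (∑ i, a i) = (2 * ρ * μ) * (G * ∑ i, a i) := by ring
      _ ≤ (2 * ρ * μ) * ⟪w, d⟫ := h1
      _ ≤ (ε + Lf + ρ * Lft) * ‖d‖ := hwdbd
      _ ≤ (ε + Lf + ρ * Lft) * Metric.diam Y := h2
      _ = Metric.diam Y * (ε + Lf + ρ * Lft) := by ring
  have hsumnn : 0 ≤ ∑ i, a i := Finset.sum_nonneg fun i _ => le_max_right _ _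
  have hfin : ‖posPart (gt (x, y))‖ * (2 * ρ * μ * G) ≤
      Metric.diam Y * (ε + Lf + ρ * Lft) := by
    calc ‖posPart (gt (x, y))‖ * (2 * ρ * μ * G)
        ≤ (∑ i, a i) * (2 * ρ * μ * G) :=
          mul_le_mul_of_nonneg_right hPsum (by positivity)
      _ = 2 * ρ * μ * G * (∑ i, a i) := by ring
      _ ≤ Metric.diam Y * (ε + Lf + ρ * Lft) := hmain
  have hrhs : (2 * μ * G)⁻¹ * Metric.diam Y * (ρ⁻¹ * ε + ρ⁻¹ * Lf + Lft) =
      Metric.diam Y * (ε + Lf + ρ * Lft) / (2 * ρ * μ * G) := by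
    field_simp
  rw [hrhs, le_div_iff₀ (by positivity)]
  exact hfin
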